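/- arXiv:2311.08387 — 4 statements merged into one kernel-verified Lean document; each statement's English description precedes it below -/
import Mathlib

section
/- Let ω : ℕ → ℕ → ℂ be the weighted adjacency matrix of an infinite weighted digraph and suppose that Σ_{k=1}^∞ |ω_{ik}|² < ∞ for every i ∈ ℕ. Then the weighted adjacency operator Ω is densely defined, the adjoint of Ω₀ equals Γ (in particular Ω* ⊆ Ω₀* = Γ), and Γ is a closed operator. -/
noncomputable section

open Complex

/-- The Hilbert space `ℓ²(ℕ, ℂ)`. -/
abbrev L2 : Type := lp (fun _ : ℕ => ℂ) 2

/-- The (everywhere-given, possibly junk-valued) formula for the weighted adjacency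
operator: `(Ω v) k = ∑' i, v i * ω i k`. -/
def OmF (ω : ℕ → ℕ → ℂ) (v : ℕ → ℂ) : ℕ → ℂ := fun k => ∑' i, v i * ω i k

/-- The domain of the weighted adjacency operator. -/
def OmDom (ω : ℕ → ℕ → ℂ) : Submodule ℂ L2 where
  carrier := {v : L2 | (∀ k, Summable fun i => (v : ℕ → ℂ) i * ω i k) ∧ Memℓp (OmF ω (v : ℕ → ℂ)) 2}
  zero_mem' := by
    constructor
    · intro k
      simp only [lp.coeFn_zero, Pi.zero_apply, zero_mul]
      exact summable_zero
    · have : OmF ω ((0 : L2) : ℕ → ℂ) = 0 := by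
        funext k
        simp [OmF, lp.coeFn_zero]
      rw [this]
      exact zero_memℓp
  add_mem' := by
    rintro a b ⟨ha1, ha2⟩ ⟨hb1, hb2⟩
    constructor
    · intro k
      have : (fun i => ((a + b : L2) : ℕ → ℂ) i * ω i k)
          = fun i => (a : ℕ → ℂ) i * ω i k + (b : ℕ → ℂ) i * ω i k := by
        funext i
        simp [lp.coeFn_add, add_mul]
      rw [this]
      exact (ha1 k).add (hb1 k)
    · have : OmF ω ((a + b : L2) : ℕ → ℂ) = OmF ω (a : ℕ → ℂ) + OmF ω (b : ℕ → ℂ) := by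
        funext k
        simp only [OmF, Pi.add_apply]
        rw [← Summable.tsum_add (ha1 k) (hb1 k)]
        congr 1
        funext i
        simp [lp.coeFn_add, add_mul]
      rw [this]
      exact ha2.add hb2
  smul_mem' := by
    rintro c a ⟨ha1, ha2⟩
    constructor
    · intro k
      have : (fun i => ((c • a : L2) : ℕ → ℂ) i * ω i k)
          = fun i => c * ((a : ℕ → ℂ) i * ω i k) := by
        funext i
        simp [lp.coeFn_smul, mul_assoc]
      rw [this]
      exact (ha1 k).mul_left c
    · have : OmF ω ((c • a : L2) : ℕ → ℂ) = c • OmF ω (a : ℕ → ℂ) := by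
        funext k
        simp only [OmF, Pi.smul_apply, smul_eq_mul]
        rw [← tsum_mul_left]
        congr 1
        funext i
        simp [lp.coeFn_smul, mul_assoc]
      rw [this]
      exact ha2.const_smul c

theorem mem_OmDom {ω : ℕ → ℕ → ℂ} {v : L2} :
    v ∈ OmDom ω ↔ (∀ k, Summable fun i => (v : ℕ → ℂ) i * ω i k) ∧
      Memℓp (OmF ω (v : ℕ → ℂ)) 2 := Iff.rfl

/-- The underlying linear map of the weighted adjacency operator. -/
def OmLM (ω : ℕ → ℕ → ℂ) : OmDom ω →ₗ[ℂ] L2 where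
  toFun v := ⟨OmF ω ((v : L2) : ℕ → ℂ), (mem_OmDom.mp v.2).2⟩
  map_add' a b := by
    apply Subtype.ext
    funext k
    simp only [lp.coeFn_add, Pi.add_apply]
    show OmF ω (((a : L2) + (b : L2) : L2) : ℕ → ℂ) k = _
    simp only [OmF]
    rw [← Summable.tsum_add ((mem_OmDom.mp a.2).1 k) ((mem_OmDom.mp b.2).1 k)]
    congr 1
    funext i
    simp [lp.coeFn_add, add_mul]
  map_smul' c a := by
    apply Subtype.ext
    funext k
    simp only [lp.coeFn_smul, Pi.smul_apply, RingHom.id_apply, smul_eq_mul]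
    show OmF ω ((c • (a : L2) : L2) : ℕ → ℂ) k = _
    simp only [OmF]
    rw [← tsum_mul_left]
    congr 1
    funext i
    simp [lp.coeFn_smul, mul_assoc]

/-- The weighted adjacency operator `Ω` as an unbounded operator on `ℓ²(ℕ,ℂ)`. -/
def OmegaOp (ω : ℕ → ℕ → ℂ) : L2 →ₗ.[ℂ] L2 := ⟨OmDom ω, OmLM ω⟩

/-- The subspace `D₀` of finitely supported sequences: the span of the standard basis. -/
def finSupp : Submodule ℂ L2 := Submodule.span ℂ (Set.range fun i : ℕ => lp.single 2 i (1 : ℂ))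

end

noncomputable section AuxLemmas

open scoped ComplexConjugate ENNReal

local notation "⟪" x ", " y "⟫" => @inner ℂ _ _ x y

lemma aux_memℓp_of_sq_summable {f : ℕ → ℂ} (hf : Summable fun k => ‖f k‖ ^ 2) :
    Memℓp f 2 := by
  apply memℓp_gen
  convert hf using 2 with k
  rw [show ((2:ℝ≥0∞).toReal) = ((2:ℕ):ℝ) by norm_num, Real.rpow_natCast]

lemma aux_memℓp_conj {f : ℕ → ℂ} (hf : Memℓp f 2) :
    Memℓp (fun k => (starRingEnd ℂ) (f k)) 2 := by
  apply memℓp_gen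
  have h2 := hf.summable (by norm_num : 0 < (2:ℝ≥0∞).toReal)
  simpa [RCLike.norm_conj] using h2

lemma aux_summable_mul {f g : ℕ → ℂ} (hf : Memℓp f 2) (hg : Memℓp g 2) :
    Summable fun i => f i * g i := by
  have h := lp.summable_inner (𝕜 := ℂ)
    (⟨fun i => (starRingEnd ℂ) (f i), aux_memℓp_conj hf⟩ : L2) (⟨g, hg⟩ : L2)
  simp only [RCLike.inner_apply] at h
  have h' : Summable fun i => g i * f i := by simpa using h
  exact h'.congr fun i => mul_comm _ _

def aux_delta (i : ℕ) : L2 := lp.single 2 i (1 : ℂ)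

lemma aux_delta_apply_ne {i j : ℕ} (hij : j ≠ i) : (aux_delta i : ℕ → ℂ) j = 0 :=
  lp.single_apply_ne 2 i _ hij

lemma aux_delta_apply_self (i : ℕ) : (aux_delta i : ℕ → ℂ) i = 1 :=
  lp.single_apply_self 2 i _

lemma aux_OmF_delta (ω : ℕ → ℕ → ℂ) (i k : ℕ) : OmF ω (aux_delta i : ℕ → ℂ) k = ω i k := by
  unfold OmF
  rw [tsum_eq_single i fun j hj => by rw [aux_delta_apply_ne hj, zero_mul]]
  rw [aux_delta_apply_self, one_mul]

lemma aux_delta_mem_OmDom {ω : ℕ → ℕ → ℂ} (h : ∀ i : ℕ, Summable fun k => ‖ω i k‖ ^ 2)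
    (i : ℕ) : aux_delta i ∈ OmDom ω := by
  refine ⟨fun k => ?_, ?_⟩
  · apply summable_of_ne_finset_zero (s := {i})
    intro j hj
    rw [aux_delta_apply_ne (by simpa using hj), zero_mul]
  · have : OmF ω (aux_delta i : ℕ → ℂ) = fun k => ω i k := funext (aux_OmF_delta ω i)
    rw [this]
    exact aux_memℓp_of_sq_summable (h i)

lemma aux_finSupp_le {ω : ℕ → ℕ → ℂ} (h : ∀ i : ℕ, Summable fun k => ‖ω i k‖ ^ 2) :
    finSupp ≤ OmDom ω :=
  Submodule.span_le.2 (by rintro _ ⟨i, rfl⟩; exact aux_delta_mem_OmDom h i)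

lemma aux_dense_finSupp : Dense (finSupp : Set L2) := by
  intro f
  have hsum := lp.hasSum_single (E := fun _ : ℕ => ℂ) (p := 2) (by norm_num) f
  refine mem_closure_of_tendsto hsum (Filter.Eventually.of_forall fun s => ?_)
  refine sum_mem fun i _ => ?_
  have h1 : lp.single 2 i ((f : ℕ → ℂ) i) = (f : ℕ → ℂ) i • (lp.single 2 i (1 : ℂ) : L2) := by
    rw [← lp.single_smul]
    norm_num
  rw [h1]
  exact Submodule.smul_mem _ _ (Submodule.subset_span ⟨i, rfl⟩)

lemma aux_inner_eq (f g : L2) :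
    ⟪f, g⟫ = ∑' i, (starRingEnd ℂ) ((f : ℕ → ℂ) i) * (g : ℕ → ℂ) i := by
  rw [lp.inner_eq_tsum]
  exact tsum_congr fun i => by rw [RCLike.inner_apply, mul_comm]

end AuxLemmas

noncomputable section MainProof

open scoped ComplexConjugate ENNReal
open Filter Topology

local notation "⟪" x ", " y "⟫" => @inner ℂ _ _ x y

/-- If every row of the weighted adjacency matrix `ω` is square-summable
(`∑_k |ω i k|² < ∞` for every `i`), then the weighted adjacency operator `Ω` is densely
defined, the adjoint of its restriction `Ω₀` to the finitely supported sequences equals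
`Γ` (so in particular `Ω* ⊆ Ω₀* = Γ`), and `Γ` is a closed operator. Here
`Γ = OmegaOp (fun i k => conj (ω k i))`, i.e. `(Γ v) k = ∑' i, v i * conj (ω k i)`. -/
theorem stmt_0 (ω : ℕ → ℕ → ℂ)
    (h : ∀ i : ℕ, Summable fun k => ‖ω i k‖ ^ 2) :
    Dense ((OmegaOp ω).domain : Set L2) ∧
    ((OmegaOp ω).domRestrict finSupp).adjoint = OmegaOp (fun i k => (starRingEnd ℂ) (ω k i)) ∧
    (OmegaOp ω).adjoint ≤ ((OmegaOp ω).domRestrict finSupp).adjoint ∧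
    (OmegaOp (fun i k => (starRingEnd ℂ) (ω k i))).IsClosed := by
  classical
  set ω' : ℕ → ℕ → ℂ := fun i k => (starRingEnd ℂ) (ω k i) with hω'
  have hrow : ∀ k, Memℓp (fun i => ω k i) 2 := fun k => aux_memℓp_of_sq_summable (h k)
  have hrowconj : ∀ k, Memℓp (fun i => (starRingEnd ℂ) (ω k i)) 2 :=
    fun k => aux_memℓp_conj (hrow k)
  have hfs : finSupp ≤ OmDom ω := aux_finSupp_le h
  have hdense : Dense ((OmegaOp ω).domain : Set L2) := fun x =>
    closure_mono (show (finSupp : Set L2) ⊆ (OmDom ω : Set L2) from hfs) (aux_dense_finSupp x)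
  set T := (OmegaOp ω).domRestrict finSupp with hTdef
  have hds : Dense (T.domain : Set L2) := by
    have hTd : T.domain = finSupp := inf_eq_left.mpr hfs
    rw [hTd]
    exact aux_dense_finSupp
  set Γ := OmegaOp ω' with hΓdef
  have hmemΓ : ∀ w : L2, Memℓp (OmF ω' (w : ℕ → ℂ)) 2 → w ∈ OmDom ω' := fun w hw =>
    ⟨fun k => aux_summable_mul (lp.memℓp w) (hrowconj k), hw⟩
  -- evaluation and row-inner computations
  have heval : ∀ (k : ℕ) (f : L2), ⟪aux_delta k, f⟫ = (f : ℕ → ℂ) k := by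
    intro k f
    rw [aux_delta, lp.inner_single_left]
    simp [RCLike.inner_apply]
  have hinnerdelta : ∀ (f : L2) (i : ℕ), ⟪f, aux_delta i⟫ = conj ((f : ℕ → ℂ) i) := by
    intro f i
    rw [aux_delta, lp.inner_single_right]
    simp [RCLike.inner_apply]
  have hOmF' : ∀ (k : ℕ) (x : L2),
      OmF ω' (x : ℕ → ℂ) k = ⟪(⟨fun i => ω k i, hrow k⟩ : L2), x⟫ := by
    intro k x
    rw [aux_inner_eq]
    exact tsum_congr fun i => mul_comm _ _
  -- the key span-induction identity
  have hkey : ∀ (w : OmDom ω') (v : L2), v ∈ finSupp →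
      ∀ hvd : v ∈ OmDom ω, ⟪(OmLM ω' w : L2), v⟫ = ⟪(w : L2), (OmLM ω ⟨v, hvd⟩ : L2)⟫ := by
    intro w v hv
    induction hv using Submodule.span_induction with
    | mem x hx =>
      obtain ⟨i, rfl⟩ : ∃ i, aux_delta i = x := hx
      intro hvd
      rw [hinnerdelta, aux_inner_eq]
      have h1 : ((OmLM ω' w : L2) : ℕ → ℂ) i = ∑' j, ((w : L2) : ℕ → ℂ) j * ω' j i := rfl
      rw [h1]
      have h2 := tsum_star (L := SummationFilter.unconditional ℕ) (f := fun j => ((w : L2) : ℕ → ℂ) j * ω' j i)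
      rw [starRingEnd_apply, h2]
      refine tsum_congr fun j => ?_
      have h3 : ((OmLM ω ⟨aux_delta i, hvd⟩ : L2) : ℕ → ℂ) j = ω i j := aux_OmF_delta ω i j
      rw [h3]
      show star (((w : L2) : ℕ → ℂ) j * star (ω i j)) = star (((w : L2) : ℕ → ℂ) j) * ω i j
      rw [star_mul', star_star]
    | zero =>
      intro hvd
      have hz : (⟨(0 : L2), hvd⟩ : OmDom ω) = 0 := rfl
      rw [hz, map_zero, inner_zero_right, inner_zero_right]
    | add x y hx hy ihx ihy =>
      intro hvd
      have hx' : x ∈ OmDom ω := hfs hx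
      have hy' : y ∈ OmDom ω := hfs hy
      have hsum : (⟨x + y, hvd⟩ : OmDom ω) = ⟨x, hx'⟩ + ⟨y, hy'⟩ := rfl
      rw [hsum, map_add, inner_add_right, inner_add_right, ihx hx', ihy hy']
    | smul a x hx ihx =>
      intro hvd
      have hx' : x ∈ OmDom ω := hfs hx
      have hs : (⟨a • x, hvd⟩ : OmDom ω) = a • ⟨x, hx'⟩ := rfl
      rw [hs, map_smul]
      have : ((a • (⟨x, hx'⟩ : OmDom ω) : OmDom ω) : L2) = a • (x : L2) := rfl
      rw [inner_smul_right, ihx hx', inner_smul_right]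
  -- Γ is a formal adjoint of T
  have hformal : Γ.IsFormalAdjoint T := by
    intro x y
    have hy2 : (y : L2) ∈ OmDom ω := y.2.2
    have hTy : T y = OmegaOp ω ⟨(y : L2), hy2⟩ := LinearPMap.domRestrict_apply rfl
    rw [hTy]
    exact hkey x (y : L2) y.2.1 hy2
  -- values of the adjoint of T
  have hval : ∀ y : T.adjoint.domain,
      ((T.adjoint y : L2) : ℕ → ℂ) = OmF ω' ((y : L2) : ℕ → ℂ) := by
    intro y
    funext i
    have hδmem : aux_delta i ∈ T.domain :=
      ⟨Submodule.subset_span ⟨i, rfl⟩, aux_delta_mem_OmDom h i⟩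
    set d : T.domain := ⟨aux_delta i, hδmem⟩ with hd
    have h2 : T d = OmegaOp ω ⟨aux_delta i, aux_delta_mem_OmDom h i⟩ :=
      LinearPMap.domRestrict_apply rfl
    have key : conj (((T.adjoint y : L2) : ℕ → ℂ) i)
        = ∑' k, conj (((y : L2) : ℕ → ℂ) k) * ω i k := by
      calc conj (((T.adjoint y : L2) : ℕ → ℂ) i)
          = ⟪(T.adjoint y : L2), aux_delta i⟫ := (hinnerdelta _ i).symm
        _ = ⟪((y : L2) : L2), (T d : L2)⟫ := LinearPMap.adjoint_isFormalAdjoint hds y d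
        _ = ∑' k, conj (((y : L2) : ℕ → ℂ) k) * ω i k := by
            rw [h2, aux_inner_eq]
            exact tsum_congr fun k => by
              rw [show ((OmegaOp ω ⟨aux_delta i, aux_delta_mem_OmDom h i⟩ : L2) : ℕ → ℂ) k
                  = ω i k from aux_OmF_delta ω i k]
    have h4 := congrArg (star : ℂ → ℂ) key
    rw [tsum_star] at h4
    have hL : star (conj (((T.adjoint y : L2) : ℕ → ℂ) i))
        = ((T.adjoint y : L2) : ℕ → ℂ) i := by
      rw [starRingEnd_apply, star_star]
    rw [hL] at h4
    rw [h4]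
    show _ = ∑' k, ((y : L2) : ℕ → ℂ) k * ω' k i
    refine tsum_congr fun k => ?_
    show star (star (((y : L2) : ℕ → ℂ) k) * ω i k)
        = ((y : L2) : ℕ → ℂ) k * star (ω i k)
    rw [star_mul', star_star]
  have hle2 : T.adjoint ≤ Γ := by
    constructor
    · intro y hy
      have h1 := hval ⟨y, hy⟩
      exact hmemΓ y (h1 ▸ lp.memℓp (T.adjoint ⟨y, hy⟩))
    · intro a b hab
      apply Subtype.ext
      have h1 := hval a
      rw [hab] at h1
      exact h1
  have heq : T.adjoint = Γ := le_antisymm hle2 (hformal.symm.le_adjoint hds)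
  -- Ω† ≤ T†
  have hle3 : (OmegaOp ω).adjoint ≤ T.adjoint := by
    have hfa2 : T.IsFormalAdjoint (OmegaOp ω).adjoint := by
      intro x y
      have hTx : T x = OmegaOp ω ⟨(x : L2), x.2.2⟩ := LinearPMap.domRestrict_apply rfl
      rw [hTx]
      calc ⟪(OmegaOp ω ⟨(x : L2), x.2.2⟩ : L2), (y : L2)⟫
          = conj ⟪(y : L2), (OmegaOp ω ⟨(x : L2), x.2.2⟩ : L2)⟫ := (inner_conj_symm _ _).symm
        _ = conj ⟪((OmegaOp ω).adjoint y : L2), ((x : L2) : L2)⟫ := by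
            rw [LinearPMap.adjoint_isFormalAdjoint hdense y ⟨(x : L2), x.2.2⟩]
        _ = ⟪(x : L2), ((OmegaOp ω).adjoint y : L2)⟫ := inner_conj_symm _ _
    exact hfa2.le_adjoint hds
  -- Γ is closed
  have hclosed : Γ.IsClosed := by
    rw [LinearPMap.IsClosed]
    apply IsSeqClosed.isClosed
    intro x p hxg hxp
    have h1 : Tendsto (fun n => (x n).1) atTop (𝓝 p.1) :=
      (continuous_fst.tendsto p).comp hxp
    have h2 : Tendsto (fun n => (x n).2) atTop (𝓝 p.2) :=
      (continuous_snd.tendsto p).comp hxp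
    have hx1 : ∀ n, OmF ω' (((x n).1 : L2) : ℕ → ℂ) = (((x n).2 : L2) : ℕ → ℂ) := by
      intro n
      rcases (LinearPMap.mem_graph_iff Γ).1 (hxg n) with ⟨z, hz1, hz2⟩
      have : OmF ω' ((z : L2) : ℕ → ℂ) = ((Γ z : L2) : ℕ → ℂ) := rfl
      rw [← hz1, ← hz2, this]
    have hk : ∀ k, OmF ω' ((p.1 : L2) : ℕ → ℂ) k = ((p.2 : L2) : ℕ → ℂ) k := by
      intro k
      have hc1 : Tendsto (fun n => ⟪(⟨fun i => ω k i, hrow k⟩ : L2), (x n).1⟫) atTop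
          (𝓝 ⟪(⟨fun i => ω k i, hrow k⟩ : L2), p.1⟫) := tendsto_const_nhds.inner h1
      have hc1' : Tendsto (fun n => OmF ω' (((x n).1 : L2) : ℕ → ℂ) k) atTop
          (𝓝 (OmF ω' ((p.1 : L2) : ℕ → ℂ) k)) := by
        simp only [← hOmF' k] at hc1
        exact hc1
      have hc2 : Tendsto (fun n => (((x n).2 : L2) : ℕ → ℂ) k) atTop
          (𝓝 (((p.2 : L2) : ℕ → ℂ) k)) := by
        have hc2' : Tendsto (fun n => ⟪aux_delta k, (x n).2⟫) atTop
            (𝓝 ⟪aux_delta k, p.2⟫) := tendsto_const_nhds.inner h2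
        simp only [heval] at hc2'
        exact hc2'
      have hfun : (fun n => OmF ω' (((x n).1 : L2) : ℕ → ℂ) k)
          = fun n => (((x n).2 : L2) : ℕ → ℂ) k := funext fun n => by rw [hx1 n]
      exact tendsto_nhds_unique (hfun ▸ hc1') hc2
    have hOf : OmF ω' ((p.1 : L2) : ℕ → ℂ) = ((p.2 : L2) : ℕ → ℂ) := funext hk
    have hmem : p.1 ∈ OmDom ω' := hmemΓ p.1 (hOf ▸ lp.memℓp p.2)
    show p ∈ Γ.graph
    rw [LinearPMap.mem_graph_iff]
    exact ⟨⟨p.1, hmem⟩, rfl, Subtype.ext hOf⟩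
  exact ⟨hdense, heq ▸ rfl, hle3, hclosed⟩

end MainProof
end

section
/- Let ω : ℕ → ℕ → ℂ be the weighted adjacency matrix of an infinite weighted digraph and suppose that Σ_{i=1}^∞ |ω_{ik}|² < ∞ for every k ∈ ℕ. Then the operator Γ is densely defined, the adjoint of Γ₀ equals Ω (in particular Γ* ⊆ Γ₀* = Ω), and Ω is a closed operator. -/
noncomputable section Stmt1Aux

open scoped ComplexConjugate ENNReal

local notation "⟪" x ", " y "⟫" => @inner ℂ _ _ x y

namespace Stmt1Aux

variable (ω : ℕ → ℕ → ℂ) (h : ∀ k : ℕ, Summable fun i => ‖ω i k‖ ^ 2)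
include h

/-- The conjugate of the `k`-th column of `ω`, as an element of `ℓ²`. -/
def colConj (k : ℕ) : L2 :=
  ⟨fun i => (starRingEnd ℂ) (ω i k), by
    apply memℓp_gen
    have h2 : (fun i => ‖(starRingEnd ℂ) (ω i k)‖ ^ (2 : ℝ≥0∞).toReal)
        = fun i => ‖ω i k‖ ^ 2 := by
      funext i
      rw [RCLike.norm_conj]
      norm_num
    rw [h2]
    exact h k⟩

lemma colConj_apply (k i : ℕ) :
    (colConj ω h k : ℕ → ℂ) i = (starRingEnd ℂ) (ω i k) := rfl

lemma summable_col (y : L2) (k : ℕ) :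
    Summable fun i => (y : ℕ → ℂ) i * ω i k := by
  have := lp.summable_inner (𝕜 := ℂ) (colConj ω h k) y
  refine this.congr fun i => ?_
  rw [RCLike.inner_apply, colConj_apply]
  simp [mul_comm]

lemma omf_eq (y : L2) (k : ℕ) :
    OmF ω (y : ℕ → ℂ) k = ⟪colConj ω h k, y⟫ := by
  rw [lp.inner_eq_tsum]
  refine tsum_congr fun i => ?_
  rw [RCLike.inner_apply, colConj_apply]
  simp [mul_comm]

lemma mem_omDom_of_eq (y z : L2) (hz : ∀ k, (z : ℕ → ℂ) k = OmF ω (y : ℕ → ℂ) k) :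
    y ∈ OmDom ω := by
  refine ⟨fun k => summable_col ω h y k, ?_⟩
  have : OmF ω (y : ℕ → ℂ) = (z : ℕ → ℂ) := funext fun k => (hz k).symm
  rw [this]
  exact lp.memℓp z

omit h in
lemma omegaOp_apply_coe (x : (OmegaOp ω).domain) :
    ((OmegaOp ω x : L2) : ℕ → ℂ) = OmF ω ((x : L2) : ℕ → ℂ) := rfl

lemma single_mem (i : ℕ) :
    lp.single 2 i (1 : ℂ) ∈ OmDom (fun i k => (starRingEnd ℂ) (ω k i)) := by
  constructor
  · intro k
    apply summable_of_ne_finset_zero (s := {i})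
    intro j hj
    rw [lp.single_apply, Pi.single_eq_of_ne (by simpa using hj)]
    simp
  · have he : OmF (fun i k => (starRingEnd ℂ) (ω k i))
        ((lp.single 2 i (1 : ℂ) : L2) : ℕ → ℂ) = (colConj ω h i : ℕ → ℂ) := by
      funext k
      unfold OmF
      rw [tsum_eq_single i]
      · rw [lp.single_apply, Pi.single_eq_same, colConj_apply]
        simp
      · intro j hj
        rw [lp.single_apply, Pi.single_eq_of_ne hj]
        simp
    rw [he]
    exact lp.memℓp _

lemma gamma_single (i : ℕ) :
    OmegaOp (fun i k => (starRingEnd ℂ) (ω k i)) ⟨lp.single 2 i (1 : ℂ), single_mem ω h i⟩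
      = colConj ω h i := by
  apply Subtype.ext
  funext k
  show OmF (fun i k => (starRingEnd ℂ) (ω k i)) ((lp.single 2 i (1 : ℂ) : L2) : ℕ → ℂ) k
      = (colConj ω h i : ℕ → ℂ) k
  unfold OmF
  rw [tsum_eq_single i]
  · rw [lp.single_apply, Pi.single_eq_same, colConj_apply]
    simp
  · intro j hj
    rw [lp.single_apply, Pi.single_eq_of_ne hj]
    simp

lemma adjoint_le (T : L2 →ₗ.[ℂ] L2) (hd : Dense (T.domain : Set L2))
    (hs : ∀ i : ℕ, ∃ hm : lp.single 2 i (1 : ℂ) ∈ T.domain,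
      T ⟨lp.single 2 i (1 : ℂ), hm⟩ = colConj ω h i) :
    T.adjoint ≤ OmegaOp ω := by
  have key : ∀ y : T.adjoint.domain, ∀ i : ℕ,
      ((T.adjoint y : L2) : ℕ → ℂ) i = OmF ω ((y : L2) : ℕ → ℂ) i := by
    intro y i
    obtain ⟨hm, hT⟩ := hs i
    have := T.adjoint_isFormalAdjoint hd y ⟨lp.single 2 i (1 : ℂ), hm⟩
    rw [hT] at this
    rw [lp.inner_single_right] at this
    have h2 : ⟪((y : L2) : L2), colConj ω h i⟫ = (starRingEnd ℂ) (OmF ω ((y : L2) : ℕ → ℂ) i) := by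
      rw [omf_eq ω h, ← inner_conj_symm]
    rw [h2] at this
    have h3 : (starRingEnd ℂ) (((T.adjoint y : L2) : ℕ → ℂ) i)
        = (starRingEnd ℂ) (OmF ω ((y : L2) : ℕ → ℂ) i) := by
      simpa [RCLike.inner_apply] using this
    exact (starRingEnd ℂ).injective h3
  constructor
  · intro y hy
    exact mem_omDom_of_eq ω h y (T.adjoint ⟨y, hy⟩) (key ⟨y, hy⟩)
  · intro x y hxy
    apply Subtype.ext
    funext i
    rw [key x i, omegaOp_apply_coe, hxy]

omit h in
lemma single_smul_one (i : ℕ) (a : ℂ) :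
    lp.single 2 i a = a • (lp.single 2 i (1 : ℂ) : L2) := by
  apply Subtype.ext
  funext j
  rw [lp.coeFn_smul]
  show (lp.single 2 i a : ℕ → ℂ) j = a • (lp.single 2 i (1:ℂ) : ℕ → ℂ) j
  rw [lp.single_apply, lp.single_apply]
  by_cases hj : j = i
  · subst hj; simp
  · rw [Pi.single_eq_of_ne hj, Pi.single_eq_of_ne hj]; simp

omit h in
lemma dense_finSupp : Dense (finSupp : Set L2) := by
  intro f
  have hf : HasSum (fun i : ℕ => lp.single 2 i ((f : ℕ → ℂ) i)) f :=
    lp.hasSum_single (by norm_num) f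
  refine mem_closure_of_tendsto hf ?_
  filter_upwards with s
  refine Submodule.sum_mem _ fun i _ => ?_
  rw [single_smul_one]
  exact Submodule.smul_mem _ _ (Submodule.subset_span ⟨i, rfl⟩)

lemma finSupp_le : finSupp ≤ OmDom (fun i k => (starRingEnd ℂ) (ω k i)) := by
  rw [finSupp, Submodule.span_le]
  rintro _ ⟨i, rfl⟩
  exact single_mem ω h i

lemma le_adjoint' :
    OmegaOp ω ≤ ((OmegaOp (fun i k => (starRingEnd ℂ) (ω k i))).domRestrict finSupp).adjoint := by
  set Γ := OmegaOp (fun i k => (starRingEnd ℂ) (ω k i)) with hΓ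
  have hmemd : ∀ v ∈ finSupp, v ∈ (Γ.domRestrict finSupp).domain := by
    intro v hv
    exact Submodule.mem_inf.mpr ⟨hv, finSupp_le ω h hv⟩
  have hFA : (Γ.domRestrict finSupp).IsFormalAdjoint (OmegaOp ω) := by
    intro x y
    have hx : (x : L2) ∈ finSupp := (Submodule.mem_inf.mp x.2).1
    suffices H : ∀ v (hv : v ∈ finSupp) (hvd : v ∈ (Γ.domRestrict finSupp).domain),
        ⟪((Γ.domRestrict finSupp) ⟨v, hvd⟩ : L2), (y : L2)⟫ = ⟪v, (OmegaOp ω y : L2)⟫ from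
      H (x : L2) hx x.2
    intro v hv
    induction hv using Submodule.span_induction with
    | mem v hvr =>
      intro hvd
      obtain ⟨i, rfl⟩ := hvr
      have hval : (Γ.domRestrict finSupp) ⟨lp.single 2 i (1 : ℂ), hvd⟩ = colConj ω h i := by
        exact (LinearPMap.domRestrict_apply (y := ⟨lp.single 2 i (1 : ℂ), single_mem ω h i⟩) rfl).trans
          (gamma_single ω h i)
      rw [hval, ← omf_eq ω h, lp.inner_single_left]
      have hco : (((OmegaOp ω) y : L2) : ℕ → ℂ) i = OmF ω ((y : L2) : ℕ → ℂ) i := by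
        rw [omegaOp_apply_coe]
      rw [RCLike.inner_apply, hco]
      simp
    | zero =>
      intro hvd
      have h0 : (⟨0, hvd⟩ : (Γ.domRestrict finSupp).domain) = 0 := Subtype.ext rfl
      rw [h0, LinearPMap.map_zero]
      simp
    | add a b ha hb iha ihb =>
      intro hvd
      have hsum : (⟨a + b, hvd⟩ : (Γ.domRestrict finSupp).domain)
          = ⟨a, hmemd a ha⟩ + ⟨b, hmemd b hb⟩ := Subtype.ext rfl
      rw [hsum, LinearPMap.map_add, inner_add_left, inner_add_left,
        iha (hmemd a ha), ihb (hmemd b hb)]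
    | smul c a ha iha =>
      intro hvd
      have hsm : (⟨c • a, hvd⟩ : (Γ.domRestrict finSupp).domain)
          = c • (⟨a, hmemd a ha⟩ : (Γ.domRestrict finSupp).domain) := Subtype.ext rfl
      rw [hsm, LinearPMap.map_smul, inner_smul_left, inner_smul_left, iha (hmemd a ha)]
  have hd : Dense (((Γ.domRestrict finSupp)).domain : Set L2) :=
    dense_finSupp.mono fun v hv => hmemd v hv
  exact LinearPMap.IsFormalAdjoint.le_adjoint hd hFA

lemma omega_isClosed : (OmegaOp ω).IsClosed := by
  have hgr : ((OmegaOp ω).graph : Set (L2 × L2)) =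
      ⋂ k : ℕ, {p : L2 × L2 | ((p.2 : L2) : ℕ → ℂ) k = ⟪colConj ω h k, p.1⟫} := by
    ext p
    simp only [Set.mem_iInter, Set.mem_setOf_eq, SetLike.mem_coe]
    rw [LinearPMap.mem_graph_iff]
    constructor
    · rintro ⟨y, hy1, hy2⟩ k
      rw [← hy2, omegaOp_apply_coe, hy1, omf_eq ω h]
    · intro hk
      have hmem : p.1 ∈ OmDom ω := mem_omDom_of_eq ω h p.1 p.2
        (fun k => by rw [hk k, omf_eq ω h])
      refine ⟨⟨p.1, hmem⟩, rfl, ?_⟩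
      apply Subtype.ext
      funext k
      rw [omegaOp_apply_coe, omf_eq ω h, ← hk k]
  show IsClosed ((OmegaOp ω).graph : Set (L2 × L2))
  rw [hgr]
  refine isClosed_iInter fun k => isClosed_eq ?_ ?_
  · have hlip : LipschitzWith 1 (fun f : L2 => (f : ℕ → ℂ) k) := by
      apply LipschitzWith.of_dist_le_mul
      intro f g
      simp only [NNReal.coe_one, one_mul, dist_eq_norm]
      have he : (f : ℕ → ℂ) k - (g : ℕ → ℂ) k = ((f - g : L2) : ℕ → ℂ) k := by
        rw [lp.coeFn_sub]; rfl
      rw [he]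
      exact lp.norm_apply_le_norm (by norm_num) (f - g) k
    exact hlip.continuous.comp continuous_snd
  · exact (Continuous.inner continuous_const continuous_id).comp continuous_fst

lemma dense_gamma :
    Dense ((OmegaOp (fun i k => (starRingEnd ℂ) (ω k i))).domain : Set L2) :=
  dense_finSupp.mono (finSupp_le ω h)

lemma memd (v : L2) (hv : v ∈ finSupp) :
    v ∈ ((OmegaOp (fun i k => (starRingEnd ℂ) (ω k i))).domRestrict finSupp).domain :=
  Submodule.mem_inf.mpr ⟨hv, finSupp_le ω h hv⟩

lemma dense_gamma0 :
    Dense ((((OmegaOp (fun i k => (starRingEnd ℂ) (ω k i))).domRestrict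
      finSupp)).domain : Set L2) :=
  dense_finSupp.mono fun v hv => memd ω h v hv

lemma gamma0_single (i : ℕ) :
    ((OmegaOp (fun i k => (starRingEnd ℂ) (ω k i))).domRestrict finSupp)
      ⟨lp.single 2 i (1 : ℂ), memd ω h _ (Submodule.subset_span ⟨i, rfl⟩)⟩
      = colConj ω h i := by
  exact (LinearPMap.domRestrict_apply
    (y := ⟨lp.single 2 i (1 : ℂ), single_mem ω h i⟩) rfl).trans (gamma_single ω h i)

lemma adjoint_eq :
    ((OmegaOp (fun i k => (starRingEnd ℂ) (ω k i))).domRestrict finSupp).adjoint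
      = OmegaOp ω := by
  refine le_antisymm (adjoint_le ω h _ (dense_gamma0 ω h) fun i => ?_) (le_adjoint' ω h)
  exact ⟨memd ω h _ (Submodule.subset_span ⟨i, rfl⟩), gamma0_single ω h i⟩

lemma gamma_adjoint_le :
    (OmegaOp (fun i k => (starRingEnd ℂ) (ω k i))).adjoint ≤
      ((OmegaOp (fun i k => (starRingEnd ℂ) (ω k i))).domRestrict finSupp).adjoint := by
  rw [adjoint_eq ω h]
  refine adjoint_le ω h _ (dense_gamma ω h) fun i => ?_
  exact ⟨single_mem ω h i, gamma_single ω h i⟩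

end Stmt1Aux

end Stmt1Aux

/-- If every column of the weighted adjacency matrix `ω` is square-summable
(`∑_i |ω i k|² < ∞` for every `k`), then the operator `Γ` (given by
`(Γ v) k = ∑' i, v i * conj (ω k i)`, i.e. `Γ = OmegaOp (fun i k => conj (ω k i))`) is
densely defined, the adjoint of its restriction `Γ₀` to the finitely supported sequences
equals `Ω` (so in particular `Γ* ⊆ Γ₀* = Ω`), and `Ω` is a closed operator. -/
theorem stmt_1 (ω : ℕ → ℕ → ℂ)
    (h : ∀ k : ℕ, Summable fun i => ‖ω i k‖ ^ 2) :
    Dense ((OmegaOp (fun i k => (starRingEnd ℂ) (ω k i))).domain : Set L2) ∧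
    ((OmegaOp (fun i k => (starRingEnd ℂ) (ω k i))).domRestrict finSupp).adjoint = OmegaOp ω ∧
    (OmegaOp (fun i k => (starRingEnd ℂ) (ω k i))).adjoint ≤
      ((OmegaOp (fun i k => (starRingEnd ℂ) (ω k i))).domRestrict finSupp).adjoint ∧
    (OmegaOp ω).IsClosed := by
  exact ⟨Stmt1Aux.dense_gamma ω h, Stmt1Aux.adjoint_eq ω h,
    Stmt1Aux.gamma_adjoint_le ω h, Stmt1Aux.omega_isClosed ω h⟩
end

section
/- Let G = (ℕ, E) be an infinite digraph. If deg⁺(i) < ∞ for all i ∈ ℕ, then the adjacency operator A is densely defined, the adjoint of A₀ equals B (so A* ⊆ A₀* = B) and B is closed. Symmetrically, if deg⁻(i) < ∞ for all i ∈ ℕ, then B is densely defined, the adjoint of B₀ equals A (so B* ⊆ B₀* = A) and A is closed. -/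
/-- The `{0,1}`-valued adjacency matrix of a digraph on `ℕ` with edge set `E`. -/
noncomputable def adjC (E : Set (ℕ × ℕ)) (i k : ℕ) : ℂ := E.indicator (fun _ => (1 : ℂ)) (i, k)

noncomputable section Helpers
open scoped ComplexConjugate
open LinearPMap

local notation "⟪" x ", " y "⟫" => @inner ℂ _ _ x y

lemma memℓp_two_of_finite {f : ℕ → ℂ} (h : {i | f i ≠ 0}.Finite) : Memℓp f 2 :=
  (memℓp_zero h).of_exponent_ge (by norm_num)

lemma finSupp_support_finite {v : L2} (hv : v ∈ finSupp) :
    {i | (v : ℕ → ℂ) i ≠ 0}.Finite := by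
  induction hv using Submodule.span_induction with
  | mem x hx =>
      obtain ⟨i, rfl⟩ := hx
      refine Set.Finite.subset (Set.finite_singleton i) ?_
      intro j hj
      by_contra hji
      exact hj (lp.single_apply_ne 2 i _ (by simpa using hji))
  | zero => simp [lp.coeFn_zero]
  | add x y hx hy ihx ihy =>
      refine Set.Finite.subset (ihx.union ihy) ?_
      intro j hj
      simp only [Set.mem_setOf_eq, lp.coeFn_add, Pi.add_apply] at hj
      by_contra h
      simp only [Set.mem_union, Set.mem_setOf_eq, not_or, not_not] at h
      exact hj (by rw [h.1, h.2, add_zero])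
  | smul c x hx ih =>
      refine Set.Finite.subset ih ?_
      intro j hj
      simp only [Set.mem_setOf_eq, lp.coeFn_smul, Pi.smul_apply, smul_eq_mul] at hj
      intro h
      exact hj (by rw [h, mul_zero])

variable {ω : ℕ → ℕ → ℂ}

lemma OmF_eq_sum {v : ℕ → ℂ} {s : Finset ℕ} (hs : ∀ i ∉ s, v i = 0) (k : ℕ) :
    OmF ω v k = ∑ i ∈ s, v i * ω i k := by
  refine tsum_eq_sum fun i hi => ?_
  rw [hs i hi, zero_mul]

lemma single_mem_OmDom (hrow : ∀ i, {k | ω i k ≠ 0}.Finite) (i : ℕ) :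
    lp.single 2 i (1 : ℂ) ∈ OmDom ω := by
  have hsupp : ∀ j, j ∉ ({i} : Finset ℕ) → (lp.single 2 i (1:ℂ) : ℕ → ℂ) j = 0 := by
    intro j hj
    exact lp.single_apply_ne 2 i _ (by simpa using hj)
  have hOmF : OmF ω (lp.single 2 i (1:ℂ) : ℕ → ℂ) = fun k => ω i k := by
    funext k
    rw [OmF_eq_sum (fun j hj => hsupp j hj) k]
    simp [lp.single_apply_self]
  constructor
  · intro k
    exact summable_of_ne_finset_zero (s := {i}) fun j hj => by rw [hsupp j hj, zero_mul]
  · rw [hOmF]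
    exact memℓp_two_of_finite (hrow i)

lemma finSupp_le_OmDom (hrow : ∀ i, {k | ω i k ≠ 0}.Finite) : finSupp ≤ OmDom ω := by
  rw [finSupp, Submodule.span_le]
  rintro x ⟨i, rfl⟩
  exact single_mem_OmDom hrow i

lemma dense_finSupp : Dense ((finSupp : Submodule ℂ L2) : Set L2) := by
  intro f
  have hf : HasSum (fun i : ℕ => lp.single 2 i (f i)) f :=
    lp.hasSum_single (by norm_num) f
  refine mem_closure_of_tendsto hf (Filter.Eventually.of_forall fun s => ?_)
  exact Submodule.sum_mem _ fun i _ => by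
    have : lp.single 2 i (f i) = (f i) • (lp.single 2 i (1 : ℂ) : L2) := by
      apply lp.ext
      funext j
      simp only [lp.coeFn_smul, Pi.smul_apply, smul_eq_mul, lp.single_apply]
      by_cases h : j = i <;> simp [Pi.single_apply, h]
    rw [this]
    exact Submodule.smul_mem _ _ (Submodule.subset_span ⟨i, rfl⟩)

lemma OmF_single (i : ℕ) : OmF ω (lp.single 2 i (1:ℂ) : ℕ → ℂ) = ω i := by
  funext k
  rw [OmF_eq_sum (s := {i}) (fun j hj => lp.single_apply_ne 2 i _ (by simpa using hj)) k]
  simp [lp.single_apply_self]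

lemma OmegaOp_coe (x : (OmegaOp ω).domain) :
    ((OmegaOp ω x : L2) : ℕ → ℂ) = OmF ω ((x : L2) : ℕ → ℂ) := rfl

lemma domRestrict_domain_eq (hrow : ∀ i, {k | ω i k ≠ 0}.Finite) :
    ((OmegaOp ω).domRestrict finSupp).domain = finSupp :=
  inf_eq_left.mpr (finSupp_le_OmDom hrow)

lemma dense_domRestrict (hrow : ∀ i, {k | ω i k ≠ 0}.Finite) :
    Dense ((((OmegaOp ω).domRestrict finSupp).domain : Submodule ℂ L2) : Set L2) := by
  rw [domRestrict_domain_eq hrow]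
  exact dense_finSupp

lemma dense_OmDom (hrow : ∀ i, {k | ω i k ≠ 0}.Finite) :
    Dense (((OmegaOp ω).domain : Submodule ℂ L2) : Set L2) :=
  dense_finSupp.mono (finSupp_le_OmDom hrow)

lemma formal_adjoint (hconj : ∀ i k, conj (ω i k) = ω i k)
    (hrow : ∀ i, {k | ω i k ≠ 0}.Finite) :
    ((OmegaOp ω).domRestrict finSupp).IsFormalAdjoint (OmegaOp fun i k => ω k i) := by
  intro x y
  have hx2 : (x : L2) ∈ OmDom ω := x.2.2
  have hxfin := finSupp_support_finite x.2.1
  set s := hxfin.toFinset with hs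
  have hxs : ∀ i, i ∉ s → ((x : L2) : ℕ → ℂ) i = 0 := by
    intro i hi
    by_contra h
    exact hi (hxfin.mem_toFinset.mpr h)
  have hTx : ((OmegaOp ω).domRestrict finSupp) x = OmegaOp ω ⟨(x : L2), hx2⟩ := LinearPMap.domRestrict_apply rfl
  have hsummable : ∀ i : ℕ, Summable fun k =>
      conj (((x : L2) : ℕ → ℂ) i) * ω i k * ((y : L2) : ℕ → ℂ) k := by
    intro i
    refine summable_of_ne_finset_zero (s := (hrow i).toFinset) fun k hk => ?_
    have : ω i k = 0 := by
      by_contra h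
      exact hk ((hrow i).mem_toFinset.mpr h)
    rw [this, mul_zero, zero_mul]
  calc ⟪((OmegaOp ω).domRestrict finSupp) x, y⟫
      = ∑' k, conj (OmF ω ((x : L2) : ℕ → ℂ) k) * ((y : L2) : ℕ → ℂ) k := by
        rw [hTx]
        exact (lp.inner_eq_tsum _ _).trans (tsum_congr fun _ => RCLike.inner_apply' _ _)
    _ = ∑' k, ∑ i ∈ s, conj (((x : L2) : ℕ → ℂ) i) * ω i k * ((y : L2) : ℕ → ℂ) k := by
        congr 1
        funext k
        rw [OmF_eq_sum hxs k, map_sum, Finset.sum_mul]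
        congr 1
        funext i
        rw [map_mul, hconj]
    _ = ∑ i ∈ s, ∑' k, conj (((x : L2) : ℕ → ℂ) i) * ω i k * ((y : L2) : ℕ → ℂ) k :=
        Summable.tsum_finsetSum fun i _ => hsummable i
    _ = ∑ i ∈ s, conj (((x : L2) : ℕ → ℂ) i) *
          (OmF (fun i k => ω k i) ((y : L2) : ℕ → ℂ) i) := by
        congr 1
        funext i
        rw [show (fun k => conj (((x : L2) : ℕ → ℂ) i) * ω i k * ((y : L2) : ℕ → ℂ) k)
            = fun k => conj (((x : L2) : ℕ → ℂ) i) * (((y : L2) : ℕ → ℂ) k * ω i k) from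
          funext fun k => by ring, tsum_mul_left]
        rfl
    _ = ⟪(x : L2), OmegaOp (fun i k => ω k i) y⟫ := by
        rw [show (⟪(x : L2), OmegaOp (fun i k => ω k i) y⟫ : ℂ)
            = ∑' i, conj (((x : L2) : ℕ → ℂ) i) *
              OmF (fun i k => ω k i) ((y : L2) : ℕ → ℂ) i from
              (lp.inner_eq_tsum _ _).trans (tsum_congr fun _ => RCLike.inner_apply' _ _)]
        refine (tsum_eq_sum fun i hi => ?_).symm
        rw [hxs i hi, _root_.map_zero, zero_mul]

lemma single_mem_restrict_domain (hrow : ∀ i, {k | ω i k ≠ 0}.Finite) (i : ℕ) :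
    lp.single 2 i (1:ℂ) ∈ ((OmegaOp ω).domRestrict finSupp).domain :=
  ⟨Submodule.subset_span ⟨i, rfl⟩, single_mem_OmDom hrow i⟩

lemma adjoint_coord (hconj : ∀ i k, conj (ω i k) = ω i k)
    (hrow : ∀ i, {k | ω i k ≠ 0}.Finite)
    (y : ((OmegaOp ω).domRestrict finSupp).adjoint.domain) (i : ℕ) :
    ((((OmegaOp ω).domRestrict finSupp).adjoint y : L2) : ℕ → ℂ) i
      = ∑' k, ((y : L2) : ℕ → ℂ) k * ω i k := by
  have hd := dense_domRestrict (ω := ω) hrow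
  have hfa := LinearPMap.adjoint_isFormalAdjoint hd
  set x : ((OmegaOp ω).domRestrict finSupp).domain :=
    ⟨lp.single 2 i (1:ℂ), single_mem_restrict_domain hrow i⟩ with hx
  have h1 := hfa y x
  have hTx : (((OmegaOp ω).domRestrict finSupp) x) =
      OmegaOp ω ⟨lp.single 2 i (1:ℂ), single_mem_OmDom hrow i⟩ :=
    LinearPMap.domRestrict_apply rfl
  have hTxc : ((((OmegaOp ω).domRestrict finSupp) x : L2) : ℕ → ℂ) = ω i := by
    rw [hTx, OmegaOp_coe]
    exact OmF_single i
  have hL : (⟪(((OmegaOp ω).domRestrict finSupp).adjoint y : L2), (x : L2)⟫ : ℂ)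
      = conj (((((OmegaOp ω).domRestrict finSupp).adjoint y : L2) : ℕ → ℂ) i) := by
    rw [hx]
    rw [show ((⟨lp.single 2 i (1:ℂ), single_mem_restrict_domain hrow i⟩ :
        ((OmegaOp ω).domRestrict finSupp).domain) : L2) = lp.single 2 i (1:ℂ) from rfl]
    rw [lp.inner_single_right]
    simp [RCLike.inner_apply]
  have hR : (⟪((y : L2)), (((OmegaOp ω).domRestrict finSupp) x : L2)⟫ : ℂ)
      = ∑' k, conj (((y : L2) : ℕ → ℂ) k) * ω i k := by
    rw [show (⟪((y : L2)), (((OmegaOp ω).domRestrict finSupp) x : L2)⟫ : ℂ)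
      = ∑' k, conj (((y : L2) : ℕ → ℂ) k) *
        ((((OmegaOp ω).domRestrict finSupp) x : L2) : ℕ → ℂ) k from
        (lp.inner_eq_tsum _ _).trans (tsum_congr fun _ => RCLike.inner_apply' _ _)]
    simp_rw [hTxc]
  have key : conj (((((OmegaOp ω).domRestrict finSupp).adjoint y : L2) : ℕ → ℂ) i)
      = ∑' k, conj (((y : L2) : ℕ → ℂ) k) * ω i k := by
    rw [← hL, ← hR]
    exact h1
  have := congrArg conj key
  rw [Complex.conj_conj] at this
  rw [this]
  rw [show ((starRingEnd ℂ) (∑' k, conj (((y : L2) : ℕ → ℂ) k) * ω i k) : ℂ)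
      = star (∑' k, conj (((y : L2) : ℕ → ℂ) k) * ω i k) from rfl, tsum_star]
  congr 1
  funext k
  simp only [star_mul', RCLike.star_def, Complex.conj_conj, hconj]

lemma adjoint_le_transpose (hconj : ∀ i k, conj (ω i k) = ω i k)
    (hrow : ∀ i, {k | ω i k ≠ 0}.Finite) :
    ((OmegaOp ω).domRestrict finSupp).adjoint ≤ OmegaOp (fun i k => ω k i) := by
  have hmem : ∀ y : ((OmegaOp ω).domRestrict finSupp).adjoint.domain,
      (y : L2) ∈ OmDom (fun i k => ω k i) := by
    intro y
    constructor
    · intro i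
      refine summable_of_ne_finset_zero (s := (hrow i).toFinset) fun k hk => ?_
      have : ω i k = 0 := by
        by_contra h
        exact hk ((hrow i).mem_toFinset.mpr h)
      simp only [this, mul_zero]
    · have : OmF (fun i k => ω k i) ((y : L2) : ℕ → ℂ)
          = ((((OmegaOp ω).domRestrict finSupp).adjoint y : L2) : ℕ → ℂ) := by
        funext i
        rw [adjoint_coord hconj hrow y i]
        rfl
      rw [this]
      exact lp.memℓp _
  refine ⟨fun z hz => hmem ⟨z, hz⟩, ?_⟩
  intro a b hab
  apply lp.ext
  funext i
  have h1 : ((OmegaOp (fun i k => ω k i) b : L2) : ℕ → ℂ) i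
      = ∑' k, ((b : L2) : ℕ → ℂ) k * ω i k := rfl
  rw [h1, adjoint_coord hconj hrow a i, hab]

lemma adjoint_eq_transpose (hconj : ∀ i k, conj (ω i k) = ω i k)
    (hrow : ∀ i, {k | ω i k ≠ 0}.Finite) :
    ((OmegaOp ω).domRestrict finSupp).adjoint = OmegaOp (fun i k => ω k i) :=
  le_antisymm (adjoint_le_transpose hconj hrow)
    ((formal_adjoint hconj hrow).le_adjoint (dense_domRestrict hrow))

lemma full_adjoint_le (hrow : ∀ i, {k | ω i k ≠ 0}.Finite) :
    (OmegaOp ω).adjoint ≤ ((OmegaOp ω).domRestrict finSupp).adjoint := by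
  have hdA : Dense (((OmegaOp ω).domain : Submodule ℂ L2) : Set L2) := dense_OmDom hrow
  have hfa := LinearPMap.adjoint_isFormalAdjoint hdA
  have hdT := dense_domRestrict (ω := ω) hrow
  have key : ∀ (y : (OmegaOp ω).adjoint.domain)
      (x : ((OmegaOp ω).domRestrict finSupp).domain),
      (⟪((OmegaOp ω).adjoint y : L2), (x : L2)⟫ : ℂ)
        = ⟪(y : L2), (((OmegaOp ω).domRestrict finSupp) x : L2)⟫ := by
    intro y x
    have hx2 : (x : L2) ∈ (OmegaOp ω).domain := x.2.2
    have hTx : (((OmegaOp ω).domRestrict finSupp) x) = OmegaOp ω ⟨(x : L2), hx2⟩ :=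
      LinearPMap.domRestrict_apply rfl
    rw [hTx]
    exact hfa y ⟨(x : L2), hx2⟩
  refine ⟨fun z hz => ?_, ?_⟩
  · exact LinearPMap.mem_adjoint_domain_of_exists _
      ⟨(OmegaOp ω).adjoint ⟨z, hz⟩, fun x => key ⟨z, hz⟩ x⟩
  · intro a b hab
    refine (LinearPMap.adjoint_apply_eq hdT b (x₀ := (OmegaOp ω).adjoint a) ?_).symm
    intro x
    have := key a x
    rwa [hab] at this

lemma eval_continuous (i : ℕ) : Continuous fun f : L2 => (f : ℕ → ℂ) i := by
  have : ∀ f : L2, (f : ℕ → ℂ) i = ⟪(lp.single 2 i (1:ℂ) : L2), f⟫ := by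
    intro f
    rw [lp.inner_single_left]
    simp [RCLike.inner_apply]
  simp_rw [this]
  exact Continuous.inner continuous_const continuous_id

lemma transpose_isClosed (hrow : ∀ i, {k | ω i k ≠ 0}.Finite) :
    (OmegaOp (fun i k => ω k i)).IsClosed := by
  have hgraph : ((OmegaOp (fun i k => ω k i)).graph : Set (L2 × L2))
      = ⋂ i : ℕ, {p : L2 × L2 |
          ((p.2 : ℕ → ℂ) i) = ∑ k ∈ (hrow i).toFinset, ((p.1 : ℕ → ℂ) k) * ω i k} := by
    ext p
    simp only [SetLike.mem_coe, LinearPMap.mem_graph_iff, Set.mem_iInter, Set.mem_setOf_eq]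
    constructor
    · rintro ⟨y, hy1, hy2⟩ i
      have h2 : ((p.2 : ℕ → ℂ) i) = OmF (fun i k => ω k i) ((y : L2) : ℕ → ℂ) i := by
        rw [← hy2]; rfl
      rw [h2, ← hy1]
      refine tsum_eq_sum fun k hk => ?_
      have : ω i k = 0 := by
        by_contra h
        exact hk ((hrow i).mem_toFinset.mpr h)
      simp only [this, mul_zero]
    · intro hp
      have hmem : p.1 ∈ OmDom (fun i k => ω k i) := by
        constructor
        · intro i
          refine summable_of_ne_finset_zero (s := (hrow i).toFinset) fun k hk => ?_
          have : ω i k = 0 := by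
            by_contra h
            exact hk ((hrow i).mem_toFinset.mpr h)
          simp only [this, mul_zero]
        · have : OmF (fun i k => ω k i) ((p.1 : L2) : ℕ → ℂ) = ((p.2 : L2) : ℕ → ℂ) := by
            funext i
            rw [hp i]
            refine tsum_eq_sum fun k hk => ?_
            have : ω i k = 0 := by
              by_contra h
              exact hk ((hrow i).mem_toFinset.mpr h)
            simp only [this, mul_zero]
          rw [this]
          exact lp.memℓp _
      refine ⟨⟨p.1, hmem⟩, rfl, ?_⟩
      apply lp.ext
      funext i
      have h1 : ((OmegaOp (fun i k => ω k i) ⟨p.1, hmem⟩ : L2) : ℕ → ℂ) i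
          = ∑' k, ((p.1 : ℕ → ℂ) k) * ω i k := rfl
      rw [h1, hp i]
      refine tsum_eq_sum fun k hk => ?_
      have : ω i k = 0 := by
        by_contra h
        exact hk ((hrow i).mem_toFinset.mpr h)
      simp only [this, mul_zero]
  rw [LinearPMap.IsClosed, hgraph]
  refine isClosed_iInter fun i => ?_
  have hc1 : Continuous fun p : L2 × L2 => ((p.2 : ℕ → ℂ) i) :=
    (eval_continuous i).comp continuous_snd
  have hc2 : Continuous fun p : L2 × L2 =>
      ∑ k ∈ (hrow i).toFinset, ((p.1 : ℕ → ℂ) k) * ω i k :=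
    continuous_finset_sum _ fun k _ =>
      (((eval_continuous k).comp continuous_fst).mul continuous_const)
  exact isClosed_eq hc1 hc2

lemma adjC_conj (E : Set (ℕ × ℕ)) (i k : ℕ) : conj (adjC E i k) = adjC E i k := by
  unfold adjC
  by_cases hm : (i, k) ∈ E
  · rw [Set.indicator_of_mem hm]; simp
  · rw [Set.indicator_of_notMem hm]; simp

lemma adjC_ne_zero {E : Set (ℕ × ℕ)} {i k : ℕ} (h : adjC E i k ≠ 0) : (i, k) ∈ E := by
  by_contra hm
  exact h (Set.indicator_of_notMem hm _)

end Helpers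
/-- Let `G = (ℕ, E)` be an infinite digraph, `A = OmegaOp (adjC E)` its
adjacency operator and `B = OmegaOp (fun i k => adjC E k i)` (so `(B v) k = ∑' i, v i * a k i`).
If `deg⁺ i < ∞` for all `i`, then `A` is densely defined, the adjoint of its restriction
`A₀` to the finitely supported sequences equals `B` (so `A* ⊆ A₀* = B`), and `B` is closed.
Symmetrically, if `deg⁻ i < ∞` for all `i`, then `B` is densely defined, `B₀* = A`
(so `B* ⊆ B₀* = A`), and `A` is closed. -/
theorem stmt_2 (E : Set (ℕ × ℕ)) :
    ((∀ i : ℕ, {k : ℕ | (i, k) ∈ E}.Finite) →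
      Dense ((OmegaOp (adjC E)).domain : Set L2) ∧
      ((OmegaOp (adjC E)).domRestrict finSupp).adjoint = OmegaOp (fun i k => adjC E k i) ∧
      (OmegaOp (adjC E)).adjoint ≤ ((OmegaOp (adjC E)).domRestrict finSupp).adjoint ∧
      (OmegaOp (fun i k => adjC E k i)).IsClosed) ∧
    ((∀ i : ℕ, {k : ℕ | (k, i) ∈ E}.Finite) →
      Dense ((OmegaOp (fun i k => adjC E k i)).domain : Set L2) ∧
      ((OmegaOp (fun i k => adjC E k i)).domRestrict finSupp).adjoint = OmegaOp (adjC E) ∧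
      (OmegaOp (fun i k => adjC E k i)).adjoint ≤
        ((OmegaOp (fun i k => adjC E k i)).domRestrict finSupp).adjoint ∧
      (OmegaOp (adjC E)).IsClosed) := by
  constructor
  · intro h
    have hrow : ∀ i, {k | adjC E i k ≠ 0}.Finite := fun i =>
      (h i).subset fun k hk => adjC_ne_zero hk
    exact ⟨dense_OmDom hrow, adjoint_eq_transpose (adjC_conj E) hrow,
      full_adjoint_le hrow, transpose_isClosed hrow⟩
  · intro h
    have hrow : ∀ i, {k | (fun i k => adjC E k i) i k ≠ 0}.Finite := fun i =>
      (h i).subset fun k hk => adjC_ne_zero hk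
    exact ⟨dense_OmDom hrow,
      adjoint_eq_transpose (fun i k => adjC_conj E k i) hrow,
      full_adjoint_le hrow, transpose_isClosed hrow⟩
end

section
/- Let 𝒜 be a Hilbert evolution algebra with a natural orthonormal basis 𝓑 = {e_i}_{i∈ℕ} and structural constants ω_{ik}. Then Σ_{k=1}^∞ |ω_{ik}|² = ‖e_i·e_i‖² < ∞ for every i ∈ ℕ, and consequently the weighted adjacency operator Ω of the associated digraph G(𝒜,𝓑) is densely defined on ℓ²(ℕ). Moreover, if in addition Σ_{i=1}^∞ |ω_{ik}|² < ∞ for every k ∈ ℕ, then Ω is a closed operator. -/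
noncomputable section

variable {H : Type*} [NormedAddCommGroup H] [InnerProductSpace ℂ H] [CompleteSpace H]

/-- The structural constants of a Hilbert evolution algebra with product `mul` relative to
the natural orthonormal basis `e`: `ω i k` is the `k`-th coordinate of `e i · e i`,
so that `e i · e i = ∑'_k ω i k • e k`. -/
def structConst (mul : H →ₗ[ℂ] H →ₗ[ℂ] H) (e : HilbertBasis ℕ ℂ H) (i k : ℕ) : ℂ :=
  e.repr (mul (e i) (e i)) k

lemma memℓp_two_iff_summable_sq (f : ℕ → ℂ) :
    Memℓp f 2 ↔ Summable fun i => ‖f i‖ ^ 2 := by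
  rw [memℓp_gen_iff (by norm_num : 0 < (2 : ENNReal).toReal)]
  simp only [show ((2 : ENNReal).toReal) = (2 : ℝ) from by norm_num, Real.rpow_two]

lemma l2_norm_sq_eq_tsum (g : L2) : ∑' k, ‖(g : ℕ → ℂ) k‖ ^ 2 = ‖g‖ ^ 2 := by
  have := lp.norm_rpow_eq_tsum (p := 2) (by norm_num) g
  simp only [show ((2 : ENNReal).toReal) = (2 : ℝ) from by norm_num, Real.rpow_two] at this
  exact this.symm

/-- Let `𝒜` be a complex separable Hilbert evolution algebra with natural
orthonormal basis `𝓑 = {e i}` and structural constants `ω i k`. Then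
`∑_k |ω i k|² = ‖e i · e i‖² < ∞` for every `i`, hence the weighted adjacency operator `Ω`
of the associated digraph `G(𝒜,𝓑)` is densely defined on `ℓ²(ℕ,ℂ)`; and if moreover
`∑_i |ω i k|² < ∞` for every `k`, then `Ω` is a closed operator. -/
theorem stmt_6
    (mul : H →ₗ[ℂ] H →ₗ[ℂ] H)
    (hcomm : ∀ x y : H, mul x y = mul y x)
    (hcont : ∀ x : H, Continuous fun y => mul x y)
    (e : HilbertBasis ℕ ℂ H)
    (hnat : ∀ i j : ℕ, i ≠ j → mul (e i) (e j) = 0)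
    (ω : ℕ → ℕ → ℂ)
    (hω : ∀ i k : ℕ, ω i k = structConst mul e i k) :
    (∀ i : ℕ, Summable fun k => ‖ω i k‖ ^ 2) ∧
    (∀ i : ℕ, (∑' k : ℕ, ‖ω i k‖ ^ 2) = ‖mul (e i) (e i)‖ ^ 2) ∧
    Dense ((OmegaOp ω).domain : Set L2) ∧
    ((∀ k : ℕ, Summable fun i => ‖ω i k‖ ^ 2) → (OmegaOp ω).IsClosed) := by
  -- the rows are ℓ²
  have hrow : ∀ i : ℕ, Memℓp (fun k => ω i k) 2 := by
    intro i
    have h : (fun k => ω i k) = ((e.repr (mul (e i) (e i)) : L2) : ℕ → ℂ) := by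
      funext k; rw [hω i k]; rfl
    rw [h]
    exact lp.memℓp _
  have h1 : ∀ i : ℕ, Summable fun k => ‖ω i k‖ ^ 2 := fun i =>
    (memℓp_two_iff_summable_sq _).mp (hrow i)
  refine ⟨h1, ?_, ?_, ?_⟩
  · -- Parseval
    intro i
    calc ∑' k, ‖ω i k‖ ^ 2
        = ∑' k, ‖((e.repr (mul (e i) (e i)) : L2) : ℕ → ℂ) k‖ ^ 2 :=
          tsum_congr fun k => by rw [hω i k]; rfl
      _ = ‖e.repr (mul (e i) (e i))‖ ^ 2 := l2_norm_sq_eq_tsum _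
      _ = ‖mul (e i) (e i)‖ ^ 2 := by rw [e.repr.norm_map]
  · -- density: every element of `L2` is a limit of finite sums of `lp.single`s,
    -- which all lie in the domain
    have hsingle : ∀ (i : ℕ) (a : ℂ), lp.single 2 i a ∈ OmDom ω := by
      intro i a
      have hcoe : ∀ j, ((lp.single 2 i a : L2) : ℕ → ℂ) j = if j = i then a else 0 := by
        intro j
        by_cases h : j = i
        · subst h; simp [lp.single_apply_self]
        · simp [lp.single_apply_ne _ _ _ h, h]
      constructor
      · intro k
        apply summable_of_ne_finset_zero (s := {i})
        intro j hj
        simp only [Finset.mem_singleton] at hj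
        rw [hcoe j, if_neg hj, zero_mul]
      · have : OmF ω ((lp.single 2 i a : L2) : ℕ → ℂ) = fun k => a * ω i k := by
          funext k
          simp only [OmF]
          rw [tsum_eq_single i]
          · rw [hcoe i, if_pos rfl]
          · intro j hj
            rw [hcoe j, if_neg hj, zero_mul]
        rw [this]
        exact (hrow i).const_mul a
    rw [Dense]
    intro f
    have hsum : HasSum (fun i : ℕ => lp.single 2 i ((f : ℕ → ℂ) i)) f :=
      lp.hasSum_single ENNReal.ofNat_ne_top f
    refine mem_closure_of_tendsto hsum ?_
    filter_upwards with s
    exact Submodule.sum_mem _ fun i _ => hsingle i _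
  · -- closedness under the column hypothesis
    intro hcol
    -- the columns, conjugated, as elements of L2
    have hcolmem : ∀ k : ℕ, Memℓp (fun i => (starRingEnd ℂ) (ω i k)) 2 := by
      intro k
      rw [memℓp_two_iff_summable_sq]
      simpa using hcol k
    set c : ℕ → L2 := fun k => ⟨fun i => (starRingEnd ℂ) (ω i k), hcolmem k⟩ with hc
    have hck : ∀ k i, ((c k : L2) : ℕ → ℂ) i = (starRingEnd ℂ) (ω i k) := fun k i => rfl
    -- key: for any v ∈ L2, the defining series converges and equals an inner product
    have hkeysum : ∀ (v : L2) (k : ℕ), Summable fun i => (v : ℕ → ℂ) i * ω i k := by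
      intro v k
      have := lp.summable_inner (𝕜 := ℂ) (c k) v
      simp only [RCLike.inner_apply, hck, RingHomCompTriple.comp_apply, Complex.conj_conj,
        starRingEnd_apply, star_star] at this
      refine this.congr fun i => ?_
      rw [mul_comm]
    have hkey : ∀ (v : L2) (k : ℕ),
        (∑' i, (v : ℕ → ℂ) i * ω i k) = inner ℂ (c k) v := by
      intro v k
      rw [lp.inner_eq_tsum]
      congr 1
      funext i
      simp only [RCLike.inner_apply, hck, starRingEnd_apply, star_star]
    have hval : ∀ (w : L2) (k : ℕ), inner ℂ (lp.single 2 k (1 : ℂ)) w = (w : ℕ → ℂ) k := by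
      intro w k
      rw [lp.inner_single_left, RCLike.inner_apply]
      simp
    rw [LinearPMap.IsClosed]
    have hgraph : ((OmegaOp ω).graph : Set (L2 × L2)) =
        ⋂ k : ℕ, {p : L2 × L2 | inner ℂ (c k) p.1 = (inner ℂ (lp.single 2 k (1 : ℂ)) p.2 : ℂ)} := by
      ext p
      simp only [SetLike.mem_coe, LinearPMap.mem_graph_iff, Set.mem_iInter, Set.mem_setOf_eq]
      constructor
      · rintro ⟨y, hy1, hy2⟩ k
        rw [hval p.2 k, ← hy2]
        have : ((OmegaOp ω ⟨y, y.2⟩ : L2) : ℕ → ℂ) k = OmF ω ((y : L2) : ℕ → ℂ) k := rfl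
        rw [show ((OmegaOp ω) y : L2) = (OmegaOp ω) ⟨y, y.2⟩ from rfl] at *
        rw [this]
        simp only [OmF]
        rw [hy1] at *
        rw [← hkey p.1 k, ← hy1]
      · intro h
        have hOmF : OmF ω ((p.1 : L2) : ℕ → ℂ) = ((p.2 : L2) : ℕ → ℂ) := by
          funext k
          simp only [OmF]
          rw [hkey p.1 k, h k, hval p.2 k]
        have hmem : p.1 ∈ OmDom ω := by
          refine ⟨fun k => hkeysum p.1 k, ?_⟩
          rw [hOmF]
          exact lp.memℓp p.2
        refine ⟨⟨p.1, hmem⟩, rfl, ?_⟩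
        apply lp.ext
        exact hOmF
    rw [hgraph]
    apply isClosed_iInter
    intro k
    exact isClosed_eq ((continuous_const.inner continuous_fst))
      ((continuous_const.inner continuous_snd))

end
end
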